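/- Let x be a non-dirty candidate with respect to threshold 5/6 in an election, and let I = {z ≠ x : z ≥_{5/6} x}. Let r be a 3-wise median of the election such that z is ranked before x in r for all z ∈ I. Suppose |I|·(|I| − 4) ≤ 3·|{z : x is ranked before z in r}|. Then for every candidate y ≠ x with x ≥_{5/6} y, x is ranked before y in r. -/
import Mathlib


open Finset

/-- A ranking (strict total order) of the finite candidate set `C`, encoded as a
bijection with `Fin (Fintype.card C)`; position `0` is the top of the ranking. -/
abbrev Ranking (C : Type*) [Fintype C] := C ≃ Fin (Fintype.card C)

section Defs

variable {C : Type*} [Fintype C] [DecidableEq C]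

/-- `x` is ranked (strictly) before `y` in the ranking `π`. -/
def Before (π : Ranking C) (x y : C) : Prop := π x < π y

instance (π : Ranking C) (x y : C) : Decidable (Before π x y) :=
  inferInstanceAs (Decidable (π x < π y))

instance : DecidableEq (Ranking C) := fun a b =>
  decidable_of_iff (∀ i, a i = b i) Equiv.ext_iff.symm

/-- The top-ranked element of `S ⊆ C` according to `π` (`⊤` if `S = ∅`). -/
def topS (π : Ranking C) (S : Finset C) : WithTop C :=
  (S.image π).min.map (fun i => π.symm i)

/-- The `k`-wise Kendall-tau distance between two rankings: the number of subsets
`S ⊆ C` with `|S| ≤ k` on whose top element the two rankings disagree (subsets of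
size at most one never contribute). -/
def kDist (k : ℕ) (π σ : Ranking C) : ℕ :=
  ((Finset.univ : Finset C).powerset.filter
    (fun S => S.card ≤ k ∧ topS π S ≠ topS σ S)).card

/-- The `k`-wise Kendall-tau distance from a ranking to a voting profile. -/
def kDistV (k : ℕ) (π : Ranking C) (V : Multiset (Ranking C)) : ℕ :=
  (V.map (fun σ => kDist k π σ)).sum

/-- `π` is a `k`-wise median (for `k = 2`: a Kemeny ranking) of the profile `V`. -/
def IsKMedian (k : ℕ) (V : Multiset (Ranking C)) (π : Ranking C) : Prop :=
  ∀ σ : Ranking C, kDistV k π V ≤ kDistV k σ V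

/-- The number of votes of `V` in which `x` is ranked before `y`. -/
def votesBefore (V : Multiset (Ranking C)) (x y : C) : ℕ :=
  Multiset.card (V.filter (fun v => Before v x y))

/-- `x ≥ₛ y` : `x` is ranked before `y` in at least `s·|V|` of the votes. -/
def AtLeastRatio (V : Multiset (Ranking C)) (s : ℝ) (x y : C) : Prop :=
  s * (Multiset.card V : ℝ) ≤ (votesBefore V x y : ℝ)

/-- `x >ₛ y` : `x` is ranked before `y` in more than `s·|V|` of the votes. -/
def MoreThanRatio (V : Multiset (Ranking C)) (s : ℝ) (x y : C) : Prop :=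
  s * (Multiset.card V : ℝ) < (votesBefore V x y : ℝ)

noncomputable instance (V : Multiset (Ranking C)) (s : ℝ) (x y : C) :
    Decidable (AtLeastRatio V s x y) :=
  inferInstanceAs (Decidable (s * (Multiset.card V : ℝ) ≤ (votesBefore V x y : ℝ)))

/-- `x` is a non-dirty candidate w.r.t. threshold `s`. -/
def NonDirty (V : Multiset (Ranking C)) (s : ℝ) (x : C) : Prop :=
  ∀ y : C, y ≠ x → AtLeastRatio V s x y ∨ AtLeastRatio V s y x

/-- `x` is ranked first (is the winner) in the ranking `π`. -/
def RankedFirst (π : Ranking C) (x : C) : Prop :=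
  ∀ y : C, y ≠ x → Before π x y

instance (π : Ranking C) (x : C) : Decidable (RankedFirst π x) :=
  inferInstanceAs (Decidable (∀ y : C, y ≠ x → Before π x y))

end Defs

set_option linter.unusedSectionVars false

namespace Stmt16Aux

section Move
variable {m : ℕ}

def moveFun (pd px : Fin m) : Fin m → Fin m := fun p =>
  if p = pd then px
  else if pd < p ∧ p ≤ px then ⟨p.val - 1, Nat.lt_of_le_of_lt (Nat.sub_le _ _) p.isLt⟩
  else p

lemma moveFun_val (pd px p : Fin m) : (moveFun pd px p).val =
    if p.val = pd.val then px.val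
    else if pd.val < p.val ∧ p.val ≤ px.val then p.val - 1
    else p.val := by
  unfold moveFun
  split_ifs with h1 h2 h3 h4 h5 <;>
    first
      | rfl
      | (exfalso; simp only [Fin.ext_iff, Fin.lt_def, Fin.le_def] at *; omega)

lemma moveFun_inj (pd px : Fin m) (h : pd < px) : Function.Injective (moveFun pd px) := by
  intro p q hpq
  have h1 := moveFun_val pd px p
  have h2 := moveFun_val pd px q
  rw [hpq] at h1
  have hlt : pd.val < px.val := h
  apply Fin.ext
  split_ifs at h1 h2 <;> omega

noncomputable def moveEquiv (pd px : Fin m) (h : pd < px) : Fin m ≃ Fin m :=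
  Equiv.ofBijective _ (Finite.injective_iff_bijective.1 (moveFun_inj pd px h))

lemma moveEquiv_val (pd px : Fin m) (h : pd < px) (p : Fin m) :
    (moveEquiv pd px h p).val =
    if p.val = pd.val then px.val
    else if pd.val < p.val ∧ p.val ≤ px.val then p.val - 1
    else p.val := moveFun_val pd px p

lemma moveEquiv_mono (pd px : Fin m) (h : pd < px) {p q : Fin m}
    (hp : p ≠ pd) (hq : q ≠ pd) (hpq : p < q) :
    moveEquiv pd px h p < moveEquiv pd px h q := by
  have h1 := moveEquiv_val pd px h p
  have h2 := moveEquiv_val pd px h q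
  have hp' : p.val ≠ pd.val := fun hc => hp (Fin.ext hc)
  have hq' : q.val ≠ pd.val := fun hc => hq (Fin.ext hc)
  have hpq' : p.val < q.val := hpq
  have hlt : pd.val < px.val := h
  rw [Fin.lt_def]
  split_ifs at h1 h2 <;> omega

end Move

section Count
variable {α : Type*}

lemma card_filter_add_not (p : α → Prop) [DecidablePred p] (V : Multiset α) :
    (V.filter p).card + (V.filter (fun a => ¬ p a)).card = V.card := by
  rw [← Multiset.card_add, Multiset.filter_add_not]

lemma card_filter_mono {p q : α → Prop} [DecidablePred p] [DecidablePred q]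
    (h : ∀ a, p a → q a) (V : Multiset α) :
    (V.filter p).card ≤ (V.filter q).card :=
  Multiset.card_le_card (Multiset.monotone_filter_right V h)

lemma card_filter_or (p q : α → Prop) [DecidablePred p] [DecidablePred q] (V : Multiset α) :
    (V.filter (fun a => p a ∨ q a)).card ≤ (V.filter p).card + (V.filter q).card := by
  have h2 := congrArg Multiset.card (Multiset.filter_add_filter p q V)
  simp only [Multiset.card_add] at h2
  omega

lemma sum_map_ite (p : α → Prop) [DecidablePred p] (V : Multiset α) :
    (V.map (fun v => if p v then (1:ℕ) else 0)).sum = (V.filter p).card := by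
  induction V using Multiset.induction_on with
  | empty => simp
  | cons a s ih =>
    rw [Multiset.map_cons, Multiset.sum_cons, Multiset.filter_cons, ih]
    split_ifs <;> simp [Nat.add_comm]

lemma sum_map_finset_sum {β γ : Type*} (P : Finset β) (V : Multiset γ)
    (f : β → γ → ℕ) :
    (V.map (fun σ => ∑ S ∈ P, f S σ)).sum = ∑ S ∈ P, (V.map (f S)).sum := by
  induction V using Multiset.induction_on with
  | empty => simp
  | cons a s ih =>
    simp [Multiset.map_cons, Multiset.sum_cons, ih, Finset.sum_add_distrib]

end Count

section Rank
variable {C : Type*} [Fintype C] [DecidableEq C]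

lemma topS_eq_of {π : Ranking C} {S : Finset C} {c : C} (hc : c ∈ S)
    (hmin : ∀ b ∈ S, π c ≤ π b) : topS π S = (c : WithTop C) := by
  have h1 : (S.image π).min = (π c : WithTop (Fin (Fintype.card C))) := by
    apply le_antisymm
    · exact Finset.min_le (Finset.mem_image_of_mem π hc)
    · apply Finset.le_min
      intro j hj
      obtain ⟨b, hb, rfl⟩ := Finset.mem_image.1 hj
      exact_mod_cast hmin b hb
  unfold topS
  rw [h1, WithTop.map_coe]
  simp

lemma topS_empty (π : Ranking C) : topS π (∅ : Finset C) = ⊤ := by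
  unfold topS; simp

lemma topS_exists (π : Ranking C) {S : Finset C} (h : S.Nonempty) :
    ∃ c ∈ S, topS π S = (c : WithTop C) ∧ ∀ b ∈ S, π c ≤ π b := by
  obtain ⟨c, hc, hmin⟩ := S.exists_min_image π h
  exact ⟨c, hc, topS_eq_of hc hmin, hmin⟩

lemma topS_eq_iff {π : Ranking C} {S : Finset C} {c : C} :
    topS π S = (c : WithTop C) ↔ c ∈ S ∧ ∀ b ∈ S, π c ≤ π b := by
  refine ⟨fun h => ?_, fun ⟨hc, hmin⟩ => topS_eq_of hc hmin⟩
  rcases S.eq_empty_or_nonempty with rfl | hne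
  · rw [topS_empty] at h; exact absurd h.symm (WithTop.coe_ne_top)
  · obtain ⟨a, ha, hta, hmin⟩ := topS_exists π hne
    rw [hta] at h
    obtain rfl : a = c := by exact_mod_cast h
    exact ⟨ha, hmin⟩

variable (V : Multiset (Ranking C))

lemma before_of_not {σ : Ranking C} {a b : C} (hab : a ≠ b) (h : ¬ Before σ a b) :
    Before σ b a := by
  unfold Before at *
  have hne : σ b ≠ σ a := fun hc => hab (σ.injective hc).symm
  exact lt_of_le_of_ne (not_lt.1 h) hne

lemma votesBefore_add {a b : C} (hab : a ≠ b) :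
    votesBefore V a b + votesBefore V b a = Multiset.card V := by
  unfold votesBefore
  rw [show V.filter (fun v => Before v b a) = V.filter (fun v => ¬ Before v a b) from
    Multiset.filter_congr (fun v _ => by
      constructor
      · intro h hc
        unfold Before at *
        exact absurd (lt_trans h hc) (lt_irrefl _)
      · exact before_of_not hab)]
  exact card_filter_add_not _ V

lemma votesBefore_chain (a b c : C) :
    votesBefore V a b ≤ votesBefore V a c + votesBefore V c b := by
  unfold votesBefore
  refine le_trans (card_filter_mono (fun σ h => ?_) V) (card_filter_or _ _ V)
  unfold Before at *
  rcases lt_or_ge (σ a) (σ c) with h1 | h1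
  · exact Or.inl h1
  · exact Or.inr (lt_of_le_of_lt h1 h)

lemma M_le {S : Finset C} {c b : C} (hb : b ∈ S) (hcb : c ≠ b) :
    (V.filter (fun σ => topS σ S = (c : WithTop C))).card ≤ votesBefore V c b := by
  refine card_filter_mono (fun σ h => ?_) V
  obtain ⟨hc, hmin⟩ := topS_eq_iff.1 h
  exact lt_of_le_of_ne (hmin b hb) (fun he => hcb (σ.injective he))

lemma top_ne_le_pair {S : Finset C} {c b : C} (hc : c ∈ S)
    (hS : ∀ t ∈ S, t = c ∨ t = b) :
    (V.filter (fun σ => ¬ topS σ S = (c : WithTop C))).card ≤ votesBefore V b c := by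
  refine card_filter_mono (fun σ h => ?_) V
  obtain ⟨t, ht, htop, hmin⟩ := topS_exists σ ⟨c, hc⟩
  have htc : t ≠ c := fun he => h (he ▸ htop)
  rcases hS t ht with rfl | rfl
  · exact absurd rfl htc
  · exact lt_of_le_of_ne (hmin c hc) (fun he => htc (σ.injective he))

lemma top_ne_le_triple {S : Finset C} {c b₁ b₂ : C} (hc : c ∈ S)
    (hS : ∀ t ∈ S, t = c ∨ t = b₁ ∨ t = b₂) :
    (V.filter (fun σ => ¬ topS σ S = (c : WithTop C))).card ≤
      votesBefore V b₁ c + votesBefore V b₂ c := by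
  refine le_trans (card_filter_mono (fun σ h => ?_) V) (card_filter_or _ _ V)
  obtain ⟨t, ht, htop, hmin⟩ := topS_exists σ ⟨c, hc⟩
  have htc : t ≠ c := fun he => h (he ▸ htop)
  have hbef : Before σ t c := lt_of_le_of_ne (hmin c hc) (fun he => htc (σ.injective he))
  rcases hS t ht with rfl | rfl | rfl
  · exact absurd rfl htc
  · exact Or.inl hbef
  · exact Or.inr hbef

lemma kDistV_eq (k : ℕ) (π : Ranking C) :
    kDistV k π V = ∑ S ∈ Finset.univ.powerset.filter (fun S : Finset C => S.card ≤ k),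
      (V.filter (fun σ => ¬ topS σ S = topS π S)).card := by
  unfold kDistV
  have h1 : ∀ σ : Ranking C, kDist k π σ =
      ∑ S ∈ Finset.univ.powerset.filter (fun S : Finset C => S.card ≤ k),
        if ¬ topS σ S = topS π S then 1 else 0 := by
    intro σ
    unfold kDist
    rw [Finset.card_filter, Finset.sum_filter]
    refine Finset.sum_congr rfl (fun S _ => ?_)
    by_cases h1 : S.card ≤ k
    · by_cases h2 : topS σ S = topS π S
      · rw [if_neg (fun h : S.card ≤ k ∧ topS π S ≠ topS σ S => h.2 h2.symm), if_pos h1,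
          if_neg (fun hc => hc h2)]
      · rw [if_pos ⟨h1, fun hc => h2 hc.symm⟩, if_pos h1, if_pos h2]
    · rw [if_neg (fun h : _ ∧ _ => h1 h.1), if_neg h1]
  calc (V.map fun σ => kDist k π σ).sum
      = (V.map fun σ => ∑ S ∈ Finset.univ.powerset.filter (fun S : Finset C => S.card ≤ k),
          if ¬ topS σ S = topS π S then 1 else 0).sum := by
        congr 1; exact Multiset.map_congr rfl (fun σ _ => h1 σ)
    _ = ∑ S ∈ Finset.univ.powerset.filter (fun S : Finset C => S.card ≤ k),
          (V.map fun σ => if ¬ topS σ S = topS π S then 1 else 0).sum := by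
        exact sum_map_finset_sum _ _ _
    _ = _ := Finset.sum_congr rfl (fun S _ => sum_map_ite _ V)

end Rank
end Stmt16Aux

-- extra aux on top of aux.lean (will be concatenated)
namespace Stmt16Aux
section Rank2
variable {C : Type*} [Fintype C] [DecidableEq C]

def gcount (V : Multiset (Ranking C)) (π : Ranking C) (S : Finset C) : ℕ :=
  (V.filter (fun σ => ¬ topS σ S = topS π S)).card

lemma kDistV_eq' (V : Multiset (Ranking C)) (k : ℕ) (π : Ranking C) :
    kDistV k π V = ∑ S ∈ Finset.univ.powerset.filter (fun S : Finset C => S.card ≤ k),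
      gcount V π S := kDistV_eq V k π

variable (V : Multiset (Ranking C))

lemma gcount_le_pair {π : Ranking C} {S : Finset C} {t' b : C}
    (htop : topS π S = (t' : WithTop C)) (ht' : t' ∈ S)
    (hS : ∀ c ∈ S, c = t' ∨ c = b) :
    gcount V π S ≤ votesBefore V b t' := by
  unfold gcount; rw [htop]; exact top_ne_le_pair V ht' hS

lemma gcount_le_triple {π : Ranking C} {S : Finset C} {t' b₁ b₂ : C}
    (htop : topS π S = (t' : WithTop C)) (ht' : t' ∈ S)
    (hS : ∀ c ∈ S, c = t' ∨ c = b₁ ∨ c = b₂) :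
    gcount V π S ≤ votesBefore V b₁ t' + votesBefore V b₂ t' := by
  unfold gcount; rw [htop]; exact top_ne_le_triple V ht' hS

lemma gcount_ge {π : Ranking C} {S : Finset C} {t b : C}
    (htop : topS π S = (t : WithTop C)) (hb : b ∈ S) (htb : t ≠ b) :
    (Multiset.card V : ℝ) - votesBefore V t b ≤ gcount V π S := by
  unfold gcount; rw [htop]
  have h1 := card_filter_add_not (fun σ => topS σ S = (t : WithTop C)) V
  have h2 := M_le V hb htb
  have h1' : ((V.filter (fun σ => topS σ S = (t : WithTop C))).card : ℝ)
      + ((V.filter (fun σ => ¬ topS σ S = (t : WithTop C))).card : ℝ)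
      = (Multiset.card V : ℝ) := by exact_mod_cast h1
  have h2' : ((V.filter (fun σ => topS σ S = (t : WithTop C))).card : ℝ)
      ≤ (votesBefore V t b : ℝ) := by exact_mod_cast h2
  linarith

lemma gcount_le_card (π : Ranking C) (S : Finset C) :
    gcount V π S ≤ Multiset.card V := Multiset.card_le_card (Multiset.filter_le _ V)

end Rank2
end Stmt16Aux

set_option maxHeartbeats 1000000 in
open Stmt16Aux in
/-- weak $5/6$-majority rule for the 3-wise Kemeny scheme. -/
theorem stmt16 {C : Type*} [Fintype C] [DecidableEq C]
    (V : Multiset (Ranking C)) (hV : V ≠ 0)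
    (x : C) (hx : NonDirty V (5 / 6) x)
    (I : Finset C) (hI : ∀ z : C, z ∈ I ↔ z ≠ x ∧ AtLeastRatio V (5 / 6) z x)
    (r : Ranking C) (hr : IsKMedian 3 V r)
    (hIx : ∀ z ∈ I, Before r z x)
    (hcard : (I.card : ℤ) * ((I.card : ℤ) - 4) ≤
      3 * ((Finset.univ.filter (fun z : C => Before r x z)).card : ℤ)) :
    ∀ y : C, y ≠ x → AtLeastRatio V (5 / 6) x y → Before r x y := by
  classical
  intro y hyx hxy
  by_contra hnb
  set n := Multiset.card V with hn
  have hnpos : 0 < n := Multiset.card_pos.2 hV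
  have hnR : (0:ℝ) < (n:ℝ) := by exact_mod_cast hnpos
  have hNc : ∀ a b : C, a ≠ b →
      (votesBefore V a b : ℝ) + (votesBefore V b a : ℝ) = (n:ℝ) := by
    intro a b hab; exact_mod_cast votesBefore_add V hab
  have hch : ∀ a b c : C,
      (votesBefore V a b : ℝ) ≤ (votesBefore V a c : ℝ) + (votesBefore V c b : ℝ) := by
    intro a b c; exact_mod_cast votesBefore_chain V a b c
  have hyxr : Before r y x := before_of_not (Ne.symm hyx) hnb
  have hnI : ∀ w : C, w ≠ x → AtLeastRatio V (5/6) x w → w ∉ I := by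
    intro w hw hat hwI
    have h1 := ((hI w).1 hwI).2
    unfold AtLeastRatio at h1 hat
    have h2 := hNc x w (fun hc => hw hc.symm)
    rw [← hn] at h1 hat
    linarith
  have hyI : y ∉ I := hnI y hyx hxy
  have hxge : ∀ w : C, w ≠ x → w ∉ I → (5/6 : ℝ) * (n:ℝ) ≤ (votesBefore V x w : ℝ) := by
    intro w hw hwI
    rcases hx w hw with h | h
    · unfold AtLeastRatio at h; rw [← hn] at h; exact h
    · exact absurd ((hI w).2 ⟨hw, h⟩) hwI
  -- the maximal non-I element ranked before x
  have hyDD : y ∈ Finset.univ.filter (fun c => Before r c x ∧ c ∉ I) :=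
    Finset.mem_filter.2 ⟨Finset.mem_univ _, hyxr, hyI⟩
  obtain ⟨d, hdDD, hdmax⟩ := Finset.exists_max_image
    (Finset.univ.filter (fun c => Before r c x ∧ c ∉ I)) (fun c => r c) ⟨y, hyDD⟩
  have hdx : Before r d x := ((Finset.mem_filter.1 hdDD).2).1
  have hdI : d ∉ I := ((Finset.mem_filter.1 hdDD).2).2
  have hdnex : d ≠ x := fun hc => absurd hdx (by rw [hc]; exact lt_irrefl _)
  set pd := r d with hpd
  set px := r x with hpx
  have hpdpx : pd < px := hdx
  have hpdpx' : pd.val < px.val := hpdpx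
  set r' : Ranking C := r.trans (moveEquiv pd px hpdpx) with hr'def
  have hval : ∀ c : C, (r' c).val =
      if (r c).val = pd.val then px.val
      else if pd.val < (r c).val ∧ (r c).val ≤ px.val then (r c).val - 1
      else (r c).val := fun c => moveEquiv_val pd px hpdpx (r c)
  have hvd : (r' d).val = px.val := by rw [hval d, if_pos rfl]
  have hvx : (r' x).val = px.val - 1 := by
    rw [hval x, if_neg (by omega), if_pos (by omega)]
  have hvz : ∀ c : C, Before r d c → Before r c x → (r' c).val = (r c).val - 1 := by
    intro c h1 h2
    have h1' : pd.val < (r c).val := h1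
    have h2' : (r c).val < px.val := h2
    rw [hval c, if_neg (by omega), if_pos (by omega)]
  have hva : ∀ c : C, Before r x c → (r' c).val = (r c).val := by
    intro c h1
    have h1' : px.val < (r c).val := h1
    rw [hval c, if_neg (by omega), if_neg (by omega)]
  have hvu : ∀ c : C, Before r c d → (r' c).val = (r c).val := by
    intro c h1
    have h1' : (r c).val < pd.val := h1
    rw [hval c, if_neg (by omega), if_neg (by omega)]
  -- the sets A and J
  set A := Finset.univ.filter (fun z : C => Before r x z) with hA
  set J := Finset.univ.filter (fun c : C => Before r d c ∧ Before r c x) with hJ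
  have hmemA : ∀ a ∈ A, Before r x a := fun a ha => (Finset.mem_filter.1 ha).2
  have hmemJ : ∀ z ∈ J, Before r d z ∧ Before r z x := fun z hz => (Finset.mem_filter.1 hz).2
  have hJI : ∀ z ∈ J, z ∈ I := by
    intro z hz
    obtain ⟨h1, h2⟩ := hmemJ z hz
    by_contra hzI
    have hzDD : z ∈ Finset.univ.filter (fun c => Before r c x ∧ c ∉ I) :=
      Finset.mem_filter.2 ⟨Finset.mem_univ _, h2, hzI⟩
    exact absurd h1 (not_lt.2 (hdmax z hzDD))
  have hJcard : J.card ≤ I.card := Finset.card_le_card (fun z hz => hJI z hz)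
  -- distinctness facts
  have hJx : ∀ z ∈ J, z ≠ x := fun z hz hc =>
    absurd (hmemJ z hz).2 (by rw [hc]; exact lt_irrefl _)
  have hJd : ∀ z ∈ J, z ≠ d := fun z hz hc =>
    absurd (hmemJ z hz).1 (by rw [hc]; exact lt_irrefl _)
  have hAx : ∀ a ∈ A, a ≠ x := fun a ha hc =>
    absurd (hmemA a ha) (by rw [hc]; exact lt_irrefl _)
  have hAd : ∀ a ∈ A, a ≠ d := fun a ha hc =>
    absurd (lt_trans hdx (hmemA a ha)) (by rw [hc]; exact lt_irrefl _)
  have hJA : ∀ z ∈ J, z ∉ A := fun z hz hc =>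
    absurd (lt_trans (hmemJ z hz).2 (hmemA z hc)) (lt_irrefl _)
  have hxA : x ∉ A := fun hc => absurd (hmemA x hc) (lt_irrefl _)
  have hdA : d ∉ A := fun hc => absurd (lt_trans hdx (hmemA d hc)) (lt_irrefl _)
  have hxJ : x ∉ J := fun hc => (hJx x hc) rfl
  have hdJ : d ∉ J := fun hc => (hJd d hc) rfl
  have hAI : ∀ a ∈ A, a ∉ I := fun a ha haI =>
    absurd (lt_trans (hIx a haI) (hmemA a ha)) (lt_irrefl _)
  -- vote-count bounds
  have hNxd : (5/6 : ℝ) * n ≤ (votesBefore V x d : ℝ) := hxge d hdnex hdI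
  have hNdx : (votesBefore V d x : ℝ) ≤ (n:ℝ)/6 := by
    have := hNc x d (fun hc => hdnex hc.symm); linarith
  have hNxz : ∀ z ∈ J, (votesBefore V x z : ℝ) ≤ (n:ℝ)/6 := by
    intro z hz
    have h1 := ((hI z).1 (hJI z hz)).2
    unfold AtLeastRatio at h1; rw [← hn] at h1
    have := hNc z x (hJx z hz); linarith
  have hNax : ∀ a ∈ A, (votesBefore V a x : ℝ) ≤ (n:ℝ)/6 := by
    intro a ha
    have h1 := hxge a (hAx a ha) (hAI a ha)
    have := hNc x a (fun hc => (hAx a ha) hc.symm); linarith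
  have hNdz : ∀ z ∈ J, (votesBefore V d z : ℝ) ≤ (n:ℝ)/3 := by
    intro z hz
    have := hch d z x
    have := hNxz z hz
    linarith [hNdx]
  have hNaz : ∀ a ∈ A, ∀ z ∈ J, (votesBefore V a z : ℝ) ≤ (n:ℝ)/3 := by
    intro a ha z hz
    have := hch a z x
    have := hNxz z hz
    have := hNax a ha
    linarith
  -- generic: d is the r-top of families
  have htopr : ∀ S : Finset C, d ∈ S → (∀ b ∈ S, b = d ∨ Before r d b) →
      topS r S = (d : WithTop C) := by
    intro S hd hb
    refine topS_eq_of hd (fun b hbS => ?_)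
    rcases hb b hbS with rfl | h
    · exact le_refl _
    · exact le_of_lt h
  -- family P1 : {d, x}
  have hbP1 : (gcount V r' {d,x} : ℝ) - (gcount V r {d,x} : ℝ) ≤ -(2*(n:ℝ)/3) := by
    have ht : topS r ({d,x}) = (d : WithTop C) := by
      refine htopr _ (by simp) ?_
      intro c hc
      simp only [Finset.mem_insert, Finset.mem_singleton] at hc
      rcases hc with rfl | rfl
      · exact Or.inl rfl
      · exact Or.inr hdx
    have ht' : topS r' ({d,x}) = (x : WithTop C) := by
      refine topS_eq_of (by simp) (fun b hb => ?_)
      simp only [Finset.mem_insert, Finset.mem_singleton] at hb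
      rcases hb with rfl | rfl
      · rw [Fin.le_def, hvx, hvd]; omega
      · exact le_refl _
    have h1 : gcount V r' {d,x} ≤ votesBefore V d x :=
      gcount_le_pair V ht' (by simp) (by intro c hc; simp at hc; tauto)
    have h2 := gcount_ge V ht (show x ∈ ({d,x}:Finset C) by simp) hdnex
    have h1' : (gcount V r' {d,x} : ℝ) ≤ votesBefore V d x := by exact_mod_cast h1
    rw [← hn] at h2
    linarith [hNdx]
  -- family P2 : {d, z}, z ∈ J
  have hbP2 : ∀ z ∈ J, (gcount V r' {d,z} : ℝ) - (gcount V r {d,z} : ℝ) ≤ -((n:ℝ)/3) := by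
    intro z hz
    obtain ⟨hz1, hz2⟩ := hmemJ z hz
    have hzd := hJd z hz
    have ht : topS r ({d,z}) = (d : WithTop C) := by
      refine htopr _ (by simp) ?_
      intro c hc
      simp only [Finset.mem_insert, Finset.mem_singleton] at hc
      rcases hc with rfl | rfl
      · exact Or.inl rfl
      · exact Or.inr hz1
    have ht' : topS r' ({d,z}) = (z : WithTop C) := by
      refine topS_eq_of (by simp) (fun b hb => ?_)
      simp only [Finset.mem_insert, Finset.mem_singleton] at hb
      rcases hb with rfl | rfl
      · rw [Fin.le_def, hvz z hz1 hz2, hvd]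
        have h1' : pd.val < (r z).val := hz1
        have h2' : (r z).val < px.val := hz2
        omega
      · exact le_refl _
    have h1 : gcount V r' {d,z} ≤ votesBefore V d z :=
      gcount_le_pair V ht' (by simp) (by intro c hc; simp at hc; tauto)
    have h2 := gcount_ge V ht (show z ∈ ({d,z}:Finset C) by simp) (fun hc => hzd hc.symm)
    have h1' : (gcount V r' {d,z} : ℝ) ≤ votesBefore V d z := by exact_mod_cast h1
    rw [← hn] at h2
    linarith [hNdz z hz]
  -- family T1 : {d, x, z}, z ∈ J
  have hbT1 : ∀ z ∈ J, (gcount V r' {d,x,z} : ℝ) - (gcount V r {d,x,z} : ℝ) ≤ -((n:ℝ)/3) := by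
    intro z hz
    obtain ⟨hz1, hz2⟩ := hmemJ z hz
    have hzd := hJd z hz
    have hzx := hJx z hz
    have ht : topS r ({d,x,z}) = (d : WithTop C) := by
      refine htopr _ (by simp) ?_
      intro c hc
      simp only [Finset.mem_insert, Finset.mem_singleton] at hc
      rcases hc with rfl | rfl | rfl
      · exact Or.inl rfl
      · exact Or.inr hdx
      · exact Or.inr hz1
    have ht' : topS r' ({d,x,z}) = (z : WithTop C) := by
      refine topS_eq_of (by simp) (fun b hb => ?_)
      simp only [Finset.mem_insert, Finset.mem_singleton] at hb
      have hzval : (r' z).val = (r z).val - 1 := hvz z hz1 hz2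
      have h1 : pd.val < (r z).val := hz1
      have h2 : (r z).val < px.val := hz2
      rcases hb with rfl | rfl | rfl
      · rw [Fin.le_def, hzval, hvd]; omega
      · rw [Fin.le_def, hzval, hvx]; omega
      · exact le_refl _
    have h1 : gcount V r' {d,x,z} ≤ votesBefore V d z + votesBefore V x z :=
      gcount_le_triple V ht' (by simp) (by intro c hc; simp at hc; tauto)
    have h2 := gcount_ge V ht (show x ∈ ({d,x,z}:Finset C) by simp) hdnex
    have h1' : (gcount V r' {d,x,z} : ℝ) ≤
        (votesBefore V d z : ℝ) + (votesBefore V x z : ℝ) := by exact_mod_cast h1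
    rw [← hn] at h2
    linarith [hNdz z hz, hNxz z hz, hNdx]
  -- family T2 : {d, x, a}, a ∈ A
  have hbT2 : ∀ a ∈ A, (gcount V r' {d,x,a} : ℝ) - (gcount V r {d,x,a} : ℝ) ≤ -((n:ℝ)/2) := by
    intro a ha
    have ha1 := hmemA a ha
    have had := hAd a ha
    have hax := hAx a ha
    have ht : topS r ({d,x,a}) = (d : WithTop C) := by
      refine htopr _ (by simp) ?_
      intro c hc
      simp only [Finset.mem_insert, Finset.mem_singleton] at hc
      rcases hc with rfl | rfl | rfl
      · exact Or.inl rfl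
      · exact Or.inr hdx
      · exact Or.inr (lt_trans hdx ha1)
    have ht' : topS r' ({d,x,a}) = (x : WithTop C) := by
      refine topS_eq_of (by simp) (fun b hb => ?_)
      simp only [Finset.mem_insert, Finset.mem_singleton] at hb
      have haval : (r' a).val = (r a).val := hva a ha1
      have h1 : px.val < (r a).val := ha1
      rcases hb with rfl | rfl | rfl
      · rw [Fin.le_def, hvx, hvd]; omega
      · exact le_refl _
      · rw [Fin.le_def, hvx, haval]; omega
    have h1 : gcount V r' {d,x,a} ≤ votesBefore V d x + votesBefore V a x :=
      gcount_le_triple V ht' (by simp) (by intro c hc; simp at hc; tauto)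
    have h2 := gcount_ge V ht (show x ∈ ({d,x,a}:Finset C) by simp) hdnex
    have h1' : (gcount V r' {d,x,a} : ℝ) ≤
        (votesBefore V d x : ℝ) + (votesBefore V a x : ℝ) := by exact_mod_cast h1
    rw [← hn] at h2
    linarith [hNdx, hNax a ha]
  -- family T3 : insert d S2, S2 ⊆ J with |S2| = 2
  have hbT3 : ∀ S2 ∈ J.powersetCard 2,
      (gcount V r' (insert d S2) : ℝ) - (gcount V r (insert d S2) : ℝ) ≤ (n:ℝ)/3 := by
    intro S2 hS2
    obtain ⟨hsub, hc2⟩ := Finset.mem_powersetCard.1 hS2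
    obtain ⟨z, hzS2⟩ := Finset.card_pos.1 (by omega : 0 < S2.card)
    have hzJ := hsub hzS2
    have hzd := hJd z hzJ
    have ht : topS r (insert d S2) = (d : WithTop C) := by
      refine htopr _ (by simp) ?_
      intro c hc
      rcases Finset.mem_insert.1 hc with rfl | hcS2
      · exact Or.inl rfl
      · exact Or.inr (hmemJ c (hsub hcS2)).1
    have h1 : gcount V r' (insert d S2) ≤ n := by rw [hn]; exact gcount_le_card V r' _
    have h2 := gcount_ge V ht (Finset.mem_insert_of_mem hzS2) (fun hc => hzd hc.symm)
    have h1' : (gcount V r' (insert d S2) : ℝ) ≤ (n:ℝ) := by exact_mod_cast h1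
    rw [← hn] at h2
    linarith [hNdz z hzJ]
  -- family T4 : {d, z, a}, z ∈ J, a ∈ A
  have hbT4 : ∀ z ∈ J, ∀ a ∈ A,
      (gcount V r' {d,z,a} : ℝ) - (gcount V r {d,z,a} : ℝ) ≤ 0 := by
    intro z hz a ha
    obtain ⟨hz1, hz2⟩ := hmemJ z hz
    have hzd := hJd z hz
    have ha1 := hmemA a ha
    have ht : topS r ({d,z,a}) = (d : WithTop C) := by
      refine htopr _ (by simp) ?_
      intro c hc
      simp only [Finset.mem_insert, Finset.mem_singleton] at hc
      rcases hc with rfl | rfl | rfl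
      · exact Or.inl rfl
      · exact Or.inr hz1
      · exact Or.inr (lt_trans hdx ha1)
    have ht' : topS r' ({d,z,a}) = (z : WithTop C) := by
      refine topS_eq_of (by simp) (fun b hb => ?_)
      simp only [Finset.mem_insert, Finset.mem_singleton] at hb
      have hzval : (r' z).val = (r z).val - 1 := hvz z hz1 hz2
      have h1 : pd.val < (r z).val := hz1
      have h2 : (r z).val < px.val := hz2
      have h3 : px.val < (r a).val := ha1
      have haval : (r' a).val = (r a).val := hva a ha1
      rcases hb with rfl | rfl | rfl
      · rw [Fin.le_def, hzval, hvd]; omega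
      · exact le_refl _
      · rw [Fin.le_def, hzval, haval]; omega
    have h1 : gcount V r' {d,z,a} ≤ votesBefore V d z + votesBefore V a z :=
      gcount_le_triple V ht' (by simp) (by intro c hc; simp at hc; tauto)
    have h2 := gcount_ge V ht (show z ∈ ({d,z,a}:Finset C) by simp) (fun hc => hzd hc.symm)
    have h1' : (gcount V r' {d,z,a} : ℝ) ≤
        (votesBefore V d z : ℝ) + (votesBefore V a z : ℝ) := by exact_mod_cast h1
    rw [← hn] at h2
    linarith [hNdz z hz, hNaz a ha z hz]
  -- families of changed sets
  set F1 : Finset (Finset C) := {({d, x} : Finset C)} with hF1def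
  set F2 := J.image (fun z => ({d, z} : Finset C)) with hF2def
  set F3 := J.image (fun z => ({d, x, z} : Finset C)) with hF3def
  set F4 := A.image (fun a => ({d, x, a} : Finset C)) with hF4def
  set F5 := (J.powersetCard 2).image (fun S2 => insert d S2) with hF5def
  set F6 := (J ×ˢ A).image (fun p => ({d, p.1, p.2} : Finset C)) with hF6def
  set Pc := (F1 ∪ F2) ∪ ((F3 ∪ F4) ∪ (F5 ∪ F6)) with hPcdef
  set P3 := Finset.univ.powerset.filter (fun S : Finset C => S.card ≤ 3) with hP3def
  -- membership in Pc
  have hPc1 : ({d,x} : Finset C) ∈ Pc :=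
    Finset.mem_union_left _ (Finset.mem_union_left _ (Finset.mem_singleton_self _))
  have hPc2 : ∀ z ∈ J, ({d,z} : Finset C) ∈ Pc := fun z hz =>
    Finset.mem_union_left _ (Finset.mem_union_right _ (Finset.mem_image_of_mem _ hz))
  have hPc3 : ∀ z ∈ J, ({d,x,z} : Finset C) ∈ Pc := fun z hz =>
    Finset.mem_union_right _
      (Finset.mem_union_left _ (Finset.mem_union_left _ (Finset.mem_image_of_mem _ hz)))
  have hPc4 : ∀ a ∈ A, ({d,x,a} : Finset C) ∈ Pc := fun a ha =>
    Finset.mem_union_right _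
      (Finset.mem_union_left _ (Finset.mem_union_right _ (Finset.mem_image_of_mem _ ha)))
  have hPc5 : ∀ S2 ∈ J.powersetCard 2, insert d S2 ∈ Pc := fun S2 h =>
    Finset.mem_union_right _
      (Finset.mem_union_right _ (Finset.mem_union_left _ (Finset.mem_image_of_mem _ h)))
  have hPc6 : ∀ z ∈ J, ∀ a ∈ A, ({d,z,a} : Finset C) ∈ Pc := fun z hz a ha =>
    Finset.mem_union_right _ (Finset.mem_union_right _ (Finset.mem_union_right _
      (Finset.mem_image.2 ⟨(z,a), Finset.mem_product.2 ⟨hz, ha⟩, rfl⟩)))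
  -- cardinality invariants
  have hinv12 : ∀ S ∈ F1 ∪ F2, S.card = 2 := by
    intro S hS
    rcases Finset.mem_union.1 hS with h | h
    · rw [Finset.mem_singleton.1 h]; exact Finset.card_pair hdnex
    · obtain ⟨z, hz, rfl⟩ := Finset.mem_image.1 h
      exact Finset.card_pair (fun hc => (hJd z hz) hc.symm)
  have hinv3456 : ∀ S ∈ (F3 ∪ F4) ∪ (F5 ∪ F6), S.card = 3 := by
    intro S hS
    rcases Finset.mem_union.1 hS with h | h
    · rcases Finset.mem_union.1 h with h' | h'
      · obtain ⟨z, hz, rfl⟩ := Finset.mem_image.1 h'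
        rw [Finset.card_insert_of_notMem (by simp [hdnex, Ne.symm (hJd z hz)]),
          Finset.card_pair (Ne.symm (hJx z hz))]
      · obtain ⟨a, ha, rfl⟩ := Finset.mem_image.1 h'
        rw [Finset.card_insert_of_notMem (by simp [hdnex, Ne.symm (hAd a ha)]),
          Finset.card_pair (Ne.symm (hAx a ha))]
    · rcases Finset.mem_union.1 h with h' | h'
      · obtain ⟨S2, hS2, rfl⟩ := Finset.mem_image.1 h'
        obtain ⟨hsub, hc2⟩ := Finset.mem_powersetCard.1 hS2
        rw [Finset.card_insert_of_notMem (fun hc => hdJ (hsub hc)), hc2]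
      · obtain ⟨p, hp, rfl⟩ := Finset.mem_image.1 h'
        obtain ⟨hp1, hp2⟩ := Finset.mem_product.1 hp
        rw [Finset.card_insert_of_notMem
            (by simp [Ne.symm (hJd p.1 hp1), Ne.symm (hAd p.2 hp2)]),
          Finset.card_pair (fun hc => (hJA p.1 hp1) (by rw [hc]; exact hp2))]
  -- x-membership invariants
  have hxin34 : ∀ S ∈ F3 ∪ F4, x ∈ S := by
    intro S hS
    rcases Finset.mem_union.1 hS with h | h
    · obtain ⟨z, hz, rfl⟩ := Finset.mem_image.1 h; simp
    · obtain ⟨a, ha, rfl⟩ := Finset.mem_image.1 h; simp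
  have hxout56 : ∀ S ∈ F5 ∪ F6, x ∉ S := by
    intro S hS
    rcases Finset.mem_union.1 hS with h | h
    · obtain ⟨S2, hS2, rfl⟩ := Finset.mem_image.1 h
      obtain ⟨hsub, _⟩ := Finset.mem_powersetCard.1 hS2
      intro hc
      rcases Finset.mem_insert.1 hc with hc' | hc'
      · exact hdnex hc'.symm
      · exact hxJ (hsub hc')
    · obtain ⟨p, hp, rfl⟩ := Finset.mem_image.1 h
      obtain ⟨hp1, hp2⟩ := Finset.mem_product.1 hp
      intro hc
      simp only [Finset.mem_insert, Finset.mem_singleton] at hc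
      rcases hc with hc' | hc' | hc'
      · exact hdnex hc'.symm
      · exact (hJx p.1 hp1) hc'.symm
      · exact (hAx p.2 hp2) hc'.symm
  -- disjointness
  have hdisj12 : Disjoint F1 F2 := Finset.disjoint_left.2 (by
    intro S h1 h2
    obtain ⟨z, hz, heq⟩ := Finset.mem_image.1 h2
    rw [Finset.mem_singleton.1 h1] at heq
    have hx2 : x ∈ ({d, z} : Finset C) := by rw [heq]; simp
    simp only [Finset.mem_insert, Finset.mem_singleton] at hx2
    rcases hx2 with h | h
    · exact hdnex h.symm
    · exact (hJx z hz) h.symm)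
  have hdisj34 : Disjoint F3 F4 := Finset.disjoint_left.2 (by
    intro S h1 h2
    obtain ⟨z, hz, heq1⟩ := Finset.mem_image.1 h1
    obtain ⟨a, ha, heq2⟩ := Finset.mem_image.1 h2
    have ha2 : a ∈ ({d, x, z} : Finset C) := by rw [heq1, ← heq2]; simp
    simp only [Finset.mem_insert, Finset.mem_singleton] at ha2
    rcases ha2 with h | h | h
    · exact (hAd a ha) h
    · exact (hAx a ha) h
    · exact (hJA z hz) (h ▸ ha))
  have hdisj56 : Disjoint F5 F6 := Finset.disjoint_left.2 (by
    intro S h1 h2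
    obtain ⟨S2, hS2, heq1⟩ := Finset.mem_image.1 h1
    obtain ⟨hsub, _⟩ := Finset.mem_powersetCard.1 hS2
    obtain ⟨p, hp, heq2⟩ := Finset.mem_image.1 h2
    obtain ⟨hp1, hp2⟩ := Finset.mem_product.1 hp
    have ha2 : p.2 ∈ insert d S2 := by rw [heq1, ← heq2]; simp
    rcases Finset.mem_insert.1 ha2 with h | h
    · exact (hAd p.2 hp2) h
    · exact (hJA p.2 (hsub h)) hp2)
  have hdisj2v3 : Disjoint (F1 ∪ F2) ((F3 ∪ F4) ∪ (F5 ∪ F6)) := Finset.disjoint_left.2 (by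
    intro S h1 h2
    have e1 := hinv12 S h1
    have e2 := hinv3456 S h2
    omega)
  have hdisj3456 : Disjoint (F3 ∪ F4) (F5 ∪ F6) := Finset.disjoint_left.2 (by
    intro S h1 h2
    exact (hxout56 S h2) (hxin34 S h1))
  have hPcP3 : Pc ⊆ P3 := by
    intro S hS
    refine Finset.mem_filter.2 ⟨Finset.mem_powerset.2 (Finset.subset_univ S), ?_⟩
    rcases Finset.mem_union.1 hS with h | h
    · have := hinv12 S h; omega
    · have := hinv3456 S h; omega
  -- the tops of all other sets do not change
  have hsame : ∀ S ∈ P3, S ∉ Pc → topS r' S = topS r S := by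
    intro S hSP3 hSPc
    have hScard : S.card ≤ 3 := (Finset.mem_filter.1 hSP3).2
    rcases S.eq_empty_or_nonempty with rfl | hne
    · rw [topS_empty, topS_empty]
    obtain ⟨w, hw, hwtop, hwmin⟩ := topS_exists r hne
    rw [hwtop]
    by_cases hwd : w = d
    · subst hwd
      by_cases hA3 : ∀ t ∈ S, t ≠ w → Before r x t
      · apply topS_eq_of hw
        intro b hb
        rcases eq_or_ne b w with rfl | hbw
        · exact le_refl _
        · have hbA := hA3 b hb hbw
          rw [Fin.le_def, hvd, hva b hbA]
          have h1 : px.val < (r b).val := hbA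
          omega
      · exfalso
        push_neg at hA3
        obtain ⟨t, htS, htw, htx⟩ := hA3
        have htd : Before r w t :=
          lt_of_le_of_ne (hwmin t htS) (fun hc => htw (r.injective hc).symm)
        have htlepx : r t ≤ px := not_lt.1 htx
        have htJx : t = x ∨ t ∈ J := by
          rcases eq_or_ne t x with rfl | htnx
          · exact Or.inl rfl
          · exact Or.inr (Finset.mem_filter.2 ⟨Finset.mem_univ _, htd,
              lt_of_le_of_ne htlepx (fun hc => htnx (r.injective hc))⟩)
        have hdt_sub : ({w, t} : Finset C) ⊆ S :=
          Finset.insert_subset_iff.2 ⟨hw, Finset.singleton_subset_iff.2 htS⟩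
        have hdtcard : ({w, t} : Finset C).card = 2 := Finset.card_pair (fun hc => htw hc.symm)
        have h2le : 2 ≤ S.card := hdtcard ▸ Finset.card_le_card hdt_sub
        have h23 : S.card = 2 ∨ S.card = 3 := by omega
        rcases h23 with h2 | h3
        · have hS2 : S = {w, t} :=
            (Finset.eq_of_subset_of_card_le hdt_sub (by omega)).symm
          apply hSPc
          rw [hS2]
          rcases htJx with rfl | htJ
          · exact hPc1
          · exact hPc2 t htJ
        · have hsd : (S \ {w, t}).card = 1 := by
            rw [Finset.card_sdiff_of_subset hdt_sub, hdtcard, h3]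
          obtain ⟨u, hu⟩ := Finset.card_eq_one.1 hsd
          have huS' : u ∈ S \ {w, t} := hu ▸ Finset.mem_singleton_self u
          have huS : u ∈ S := (Finset.mem_sdiff.1 huS').1
          have hunot : u ≠ w ∧ u ≠ t := by
            have := (Finset.mem_sdiff.1 huS').2
            simp only [Finset.mem_insert, Finset.mem_singleton] at this
            tauto
          have hsub3 : ({w, t, u} : Finset C) ⊆ S :=
            Finset.insert_subset_iff.2 ⟨hw, Finset.insert_subset_iff.2
              ⟨htS, Finset.singleton_subset_iff.2 huS⟩⟩
          have hcard3' : ({w, t, u} : Finset C).card = 3 := by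
            rw [Finset.card_insert_of_notMem
                (by
                  simp only [Finset.mem_insert, Finset.mem_singleton]
                  push_neg
                  exact ⟨fun hc => htw hc.symm, fun hc => hunot.1 hc.symm⟩),
              Finset.card_pair (fun hc => hunot.2 hc.symm)]
          have hS3 : S = {w, t, u} :=
            (Finset.eq_of_subset_of_card_le hsub3 (by omega)).symm
          have hdu : Before r w u :=
            lt_of_le_of_ne (hwmin u huS) (fun hc => hunot.1 (r.injective hc).symm)
          have huJxA : u = x ∨ u ∈ J ∨ u ∈ A := by
            rcases eq_or_ne u x with rfl | hux
            · exact Or.inl rfl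
            rcases lt_trichotomy (r u) px with h | h | h
            · exact Or.inr (Or.inl (Finset.mem_filter.2 ⟨Finset.mem_univ _, hdu, h⟩))
            · exact absurd (r.injective h) hux
            · exact Or.inr (Or.inr (Finset.mem_filter.2 ⟨Finset.mem_univ _, h⟩))
          apply hSPc
          rw [hS3]
          rcases htJx with rfl | htJ
          · rcases huJxA with rfl | huJ | huA
            · exact absurd rfl hunot.2
            · exact hPc3 u huJ
            · exact hPc4 u huA
          · rcases huJxA with rfl | huJ | huA
            · rw [Finset.pair_comm t u]
              exact hPc3 t htJ
            · exact hPc5 {t, u} (Finset.mem_powersetCard.2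
                ⟨Finset.insert_subset_iff.2 ⟨htJ, Finset.singleton_subset_iff.2 huJ⟩,
                  Finset.card_pair (Ne.symm hunot.2)⟩)
            · exact hPc6 t htJ u huA
    · apply topS_eq_of hw
      intro b hb
      rcases eq_or_ne b w with rfl | hbw
      · exact le_refl _
      rcases eq_or_ne b d with rfl | hbd
      · have hwb : r w < r b := lt_of_le_of_ne (hwmin b hb) (fun hc => hbw (r.injective hc).symm)
        rw [Fin.le_def, hvu w hwb, hvd]
        have h2 : (r w).val < pd.val := hwb
        omega
      · have hlt : r w < r b := lt_of_le_of_ne (hwmin b hb) (fun hc => hbw (r.injective hc).symm)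
        exact le_of_lt (moveEquiv_mono pd px hpdpx
          (fun hc => hwd (r.injective hc)) (fun hc => hbd (r.injective hc)) hlt)
  -- median gives nonnegative total change
  have hmed : (0:ℝ) ≤ ∑ S ∈ P3, ((gcount V r' S : ℝ) - (gcount V r S : ℝ)) := by
    have h0 := hr r'
    rw [kDistV_eq' V 3 r, kDistV_eq' V 3 r'] at h0
    rw [← hP3def] at h0
    have h0' : (∑ S ∈ P3, (gcount V r S : ℝ)) ≤ ∑ S ∈ P3, (gcount V r' S : ℝ) := by
      exact_mod_cast h0
    rw [Finset.sum_sub_distrib]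
    linarith
  have hzero : ∀ S ∈ P3, S ∉ Pc → ((gcount V r' S : ℝ) - (gcount V r S : ℝ)) = 0 := by
    intro S h1 h2
    have he : gcount V r' S = gcount V r S := by
      unfold gcount
      rw [hsame S h1 h2]
    rw [he, sub_self]
  have hsplit : ∑ S ∈ P3, ((gcount V r' S : ℝ) - (gcount V r S : ℝ))
      = ∑ S ∈ Pc, ((gcount V r' S : ℝ) - (gcount V r S : ℝ)) :=
    (Finset.sum_subset hPcP3 hzero).symm
  -- injectivity of the parametrizations
  have hinj2 : ∀ z1 ∈ J, ∀ z2 ∈ J, ({d,z1} : Finset C) = {d,z2} → z1 = z2 := by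
    intro z1 h1 z2 h2 heq
    have hm : z1 ∈ ({d, z2} : Finset C) := by rw [← heq]; simp
    simp only [Finset.mem_insert, Finset.mem_singleton] at hm
    rcases hm with h | h
    · exact absurd h (hJd z1 h1)
    · exact h
  have hinj3 : ∀ z1 ∈ J, ∀ z2 ∈ J, ({d,x,z1} : Finset C) = {d,x,z2} → z1 = z2 := by
    intro z1 h1 z2 h2 heq
    have hm : z1 ∈ ({d, x, z2} : Finset C) := by rw [← heq]; simp
    simp only [Finset.mem_insert, Finset.mem_singleton] at hm
    rcases hm with h | h | h
    · exact absurd h (hJd z1 h1)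
    · exact absurd h (hJx z1 h1)
    · exact h
  have hinj4 : ∀ a1 ∈ A, ∀ a2 ∈ A, ({d,x,a1} : Finset C) = {d,x,a2} → a1 = a2 := by
    intro a1 h1 a2 h2 heq
    have hm : a1 ∈ ({d, x, a2} : Finset C) := by rw [← heq]; simp
    simp only [Finset.mem_insert, Finset.mem_singleton] at hm
    rcases hm with h | h | h
    · exact absurd h (hAd a1 h1)
    · exact absurd h (hAx a1 h1)
    · exact h
  have hinj5 : ∀ s1 ∈ J.powersetCard 2, ∀ s2 ∈ J.powersetCard 2,
      insert d s1 = insert d s2 → s1 = s2 := by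
    intro s1 h1 s2 h2 heq
    obtain ⟨hsub1, _⟩ := Finset.mem_powersetCard.1 h1
    obtain ⟨hsub2, _⟩ := Finset.mem_powersetCard.1 h2
    ext c
    constructor
    · intro hc
      have hm : c ∈ insert d s2 := by rw [← heq]; exact Finset.mem_insert_of_mem hc
      rcases Finset.mem_insert.1 hm with h | h
      · exact absurd h (hJd c (hsub1 hc))
      · exact h
    · intro hc
      have hm : c ∈ insert d s1 := by rw [heq]; exact Finset.mem_insert_of_mem hc
      rcases Finset.mem_insert.1 hm with h | h
      · exact absurd h (hJd c (hsub2 hc))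
      · exact h
  have hinj6 : ∀ p1 ∈ J ×ˢ A, ∀ p2 ∈ J ×ˢ A,
      ({d,p1.1,p1.2} : Finset C) = {d,p2.1,p2.2} → p1 = p2 := by
    intro p1 h1 p2 h2 heq
    obtain ⟨h11, h12⟩ := Finset.mem_product.1 h1
    obtain ⟨h21, h22⟩ := Finset.mem_product.1 h2
    have e1 : p1.1 = p2.1 := by
      have hm : p1.1 ∈ ({d,p2.1,p2.2} : Finset C) := by rw [← heq]; simp
      simp only [Finset.mem_insert, Finset.mem_singleton] at hm
      rcases hm with h | h | h
      · exact absurd h (hJd _ h11)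
      · exact h
      · exact absurd (show p1.1 ∈ A by rw [h]; exact h22) (hJA _ h11)
    have e2 : p1.2 = p2.2 := by
      have hm : p1.2 ∈ ({d,p2.1,p2.2} : Finset C) := by rw [← heq]; simp
      simp only [Finset.mem_insert, Finset.mem_singleton] at hm
      rcases hm with h | h | h
      · exact absurd h (hAd _ h12)
      · exact absurd (show p2.1 ∈ A by rw [← h]; exact h12) (hJA _ h21)
      · exact h
    exact Prod.ext e1 e2
  -- per-family sums
  have hs1 : ∑ S ∈ F1, ((gcount V r' S:ℝ) - (gcount V r S:ℝ)) ≤ -(2*(n:ℝ)/3) := by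
    rw [hF1def, Finset.sum_singleton]; exact hbP1
  have hs2 : ∑ S ∈ F2, ((gcount V r' S:ℝ) - (gcount V r S:ℝ))
      ≤ (J.card:ℝ) * (-((n:ℝ)/3)) := by
    rw [hF2def, Finset.sum_image hinj2]
    calc ∑ z ∈ J, ((gcount V r' {d,z}:ℝ) - (gcount V r {d,z}:ℝ))
        ≤ ∑ _z ∈ J, -((n:ℝ)/3) := Finset.sum_le_sum hbP2
      _ = (J.card:ℝ) * (-((n:ℝ)/3)) := by rw [Finset.sum_const, nsmul_eq_mul]
  have hs3 : ∑ S ∈ F3, ((gcount V r' S:ℝ) - (gcount V r S:ℝ))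
      ≤ (J.card:ℝ) * (-((n:ℝ)/3)) := by
    rw [hF3def, Finset.sum_image hinj3]
    calc ∑ z ∈ J, ((gcount V r' {d,x,z}:ℝ) - (gcount V r {d,x,z}:ℝ))
        ≤ ∑ _z ∈ J, -((n:ℝ)/3) := Finset.sum_le_sum hbT1
      _ = (J.card:ℝ) * (-((n:ℝ)/3)) := by rw [Finset.sum_const, nsmul_eq_mul]
  have hs4 : ∑ S ∈ F4, ((gcount V r' S:ℝ) - (gcount V r S:ℝ))
      ≤ (A.card:ℝ) * (-((n:ℝ)/2)) := by
    rw [hF4def, Finset.sum_image hinj4]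
    calc ∑ a ∈ A, ((gcount V r' {d,x,a}:ℝ) - (gcount V r {d,x,a}:ℝ))
        ≤ ∑ _a ∈ A, -((n:ℝ)/2) := Finset.sum_le_sum hbT2
      _ = (A.card:ℝ) * (-((n:ℝ)/2)) := by rw [Finset.sum_const, nsmul_eq_mul]
  have hs5 : ∑ S ∈ F5, ((gcount V r' S:ℝ) - (gcount V r S:ℝ))
      ≤ ((J.powersetCard 2).card:ℝ) * ((n:ℝ)/3) := by
    rw [hF5def, Finset.sum_image hinj5]
    calc ∑ S2 ∈ J.powersetCard 2, ((gcount V r' (insert d S2):ℝ) - (gcount V r (insert d S2):ℝ))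
        ≤ ∑ _S2 ∈ J.powersetCard 2, ((n:ℝ)/3) := Finset.sum_le_sum hbT3
      _ = ((J.powersetCard 2).card:ℝ) * ((n:ℝ)/3) := by rw [Finset.sum_const, nsmul_eq_mul]
  have hs6 : ∑ S ∈ F6, ((gcount V r' S:ℝ) - (gcount V r S:ℝ)) ≤ 0 := by
    rw [hF6def, Finset.sum_image hinj6]
    refine Finset.sum_nonpos (fun p hp => ?_)
    obtain ⟨hp1, hp2⟩ := Finset.mem_product.1 hp
    exact hbT4 p.1 hp1 p.2 hp2
  -- master inequality
  rw [hsplit, hPcdef, Finset.sum_union hdisj2v3, Finset.sum_union hdisj12,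
    Finset.sum_union hdisj3456, Finset.sum_union hdisj34, Finset.sum_union hdisj56] at hmed
  have hmaster : (0:ℝ) ≤ -(2*(n:ℝ)/3) - (J.card:ℝ)*((n:ℝ)/3) - (J.card:ℝ)*((n:ℝ)/3)
      - (A.card:ℝ)*((n:ℝ)/2) + ((J.powersetCard 2).card:ℝ)*((n:ℝ)/3) := by
    linarith [hs1, hs2, hs3, hs4, hs5, hs6, hmed]
  -- cardinality of the 2-subsets
  have hdvd : 2 ∣ J.card * (J.card - 1) := by
    rcases Nat.even_or_odd J.card with h | h
    · exact Dvd.dvd.mul_right h.two_dvd _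
    · exact Dvd.dvd.mul_left (Nat.Odd.sub_odd h odd_one).two_dvd _
  have hKR : 2 * ((J.powersetCard 2).card : ℝ) = (J.card:ℝ) * ((J.card:ℝ) - 1) := by
    have h1 : 2 * (J.powersetCard 2).card = J.card * (J.card - 1) := by
      rw [Finset.card_powersetCard, Nat.choose_two_right, Nat.mul_div_cancel' hdvd]
    rcases Nat.eq_zero_or_pos J.card with h0 | h0
    · have h2 : (J.powersetCard 2).card = 0 := by rw [h0] at h1; omega
      rw [h2, h0]; norm_num
    · have h2 : ((J.card * (J.card - 1) : ℕ) : ℝ) = (J.card:ℝ) * ((J.card:ℝ) - 1) := by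
        push_cast [Nat.cast_sub h0]
        ring
      rw [← h2, ← h1]
      push_cast
      ring
  -- final arithmetic
  have hstep : (0:ℝ) ≤ -2/3 - 2/3*(J.card:ℝ) - (A.card:ℝ)/2
      + ((J.powersetCard 2).card:ℝ)/3 := by
    by_contra hcon
    push_neg at hcon
    nlinarith [hmaster, mul_pos hnR (by linarith :
      (0:ℝ) < 2/3 + 2/3*(J.card:ℝ) + (A.card:ℝ)/2 - ((J.powersetCard 2).card:ℝ)/3)]
  have hq : 3*(A.card:ℝ) ≤ (J.card:ℝ)*(J.card:ℝ) - 5*(J.card:ℝ) - 4 := by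
    linarith [hKR, hstep]
  have hcardR : ((I.card:ℝ)) * ((I.card:ℝ) - 4) ≤ 3 * (A.card:ℝ) := by exact_mod_cast hcard
  have hJleI : (J.card:ℝ) ≤ (I.card:ℝ) := by exact_mod_cast hJcard
  have hA0 : (0:ℝ) ≤ (A.card:ℝ) := Nat.cast_nonneg _
  have hJ0 : (0:ℝ) ≤ (J.card:ℝ) := Nat.cast_nonneg _
  have hI0 : (0:ℝ) ≤ (I.card:ℝ) := Nat.cast_nonneg _
  have hJ5 : (5:ℝ) ≤ (J.card:ℝ) := by
    by_contra hcon
    push_neg at hcon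
    nlinarith [mul_nonneg hJ0 (by linarith : (0:ℝ) ≤ 5 - (J.card:ℝ)), hq, hA0]
  have hprod : (0:ℝ) ≤ ((I.card:ℝ) - (J.card:ℝ)) * ((I.card:ℝ) + (J.card:ℝ) - 5) :=
    mul_nonneg (by linarith) (by linarith)
  nlinarith [hprod, hq, hcardR, hI0]
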